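/- For the sequence x̄ = (x_1,x_2,...) ∈ ([0,1]²)^ℕ constructed from the triangle data, and for every continuous function f : [0,1]² → [0,1], the sequence (f(x_1),f(x_2),...) ∈ [0,1]^ℕ is minimal. -/

import Mathlib

open Set unitInterval

/-- The left shift `S` on sequences: `S(x₁,x₂,x₃,…) = (x₂,x₃,…)`. -/
def shiftSeq {X : Type*} (z : ℕ → X) : ℕ → X := fun n => z (n + 1)

/-- The closure of the forward shift-orbit `{z, Sz, S²z, …}` of a sequence `z`,
inside the sequence space `ℕ → X`.  (For a compact metric space `X` the product
topology on `ℕ → X` is exactly the topology of the metric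
`d̄(x̄,ȳ) = ∑ᵢ d(xᵢ,yᵢ)/2ⁱ`.) -/
def shiftOrbitClosure {X : Type*} [TopologicalSpace X] (z : ℕ → X) : Set (ℕ → X) :=
  closure (Set.range fun k => shiftSeq^[k] z)

/-- A sequence `z` is *minimal* if the closure of its shift-orbit is a minimal
dynamical system under the shift, i.e. every point of this closure has dense
forward orbit in it. -/
def IsMinimalSeq {X : Type*} [TopologicalSpace X] (z : ℕ → X) : Prop :=
  ∀ w ∈ shiftOrbitClosure z, shiftOrbitClosure z ⊆ shiftOrbitClosure w

/-- The 2-Toeplitz sequence of `B = (b 0, b 1, …)` (all sequences 0-indexed):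
its `n`-th term is `b p` where `2 ^ p` exactly divides `n + 1`; equivalently the
term at (1-indexed) position `j` is `b_i` for all `j ≡ 2^(i-1) (mod 2^i)`. -/
def toeplitz2 {X : Type*} (b : ℕ → X) : ℕ → X :=
  fun n => b (padicValNat 2 (n + 1))

/- ### Auxiliary lemmas about the shift -/

lemma shiftSeq_iterate {X : Type*} (z : ℕ → X) (k n : ℕ) :
    shiftSeq^[k] z n = z (n + k) := by
  induction k generalizing z n with
  | zero => rfl
  | succ k ih =>
      rw [Function.iterate_succ_apply, ih]
      simp [shiftSeq, Nat.add_assoc, Nat.add_comm 1 k]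

lemma continuous_shiftSeq {X : Type*} [TopologicalSpace X] :
    Continuous (shiftSeq (X := X)) :=
  continuous_pi fun n => continuous_apply (n + 1)

lemma shiftSeq_mem_orbitClosure {X : Type*} [TopologicalSpace X] (z w : ℕ → X)
    (hw : w ∈ shiftOrbitClosure z) : shiftSeq w ∈ shiftOrbitClosure z := by
  have h1 : shiftSeq '' (Set.range fun k => shiftSeq^[k] z) ⊆
      (Set.range fun k => shiftSeq^[k] z) := by
    rintro - ⟨-, ⟨k, rfl⟩, rfl⟩
    refine ⟨k + 1, ?_⟩
    show shiftSeq^[k + 1] z = shiftSeq (shiftSeq^[k] z)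
    rw [Function.iterate_succ_apply']
  have := (image_closure_subset_closure_image (continuous_shiftSeq (X := X))).trans
    (closure_mono h1)
  exact this ⟨w, hw, rfl⟩

lemma iterate_shiftSeq_mem_orbitClosure {X : Type*} [TopologicalSpace X] (z w : ℕ → X)
    (hw : w ∈ shiftOrbitClosure z) (k : ℕ) : shiftSeq^[k] w ∈ shiftOrbitClosure z := by
  induction k with
  | zero => exact hw
  | succ k ih =>
      rw [Function.iterate_succ_apply']
      exact shiftSeq_mem_orbitClosure z _ ih

/-- Key criterion: syndetic approximate recurrence implies minimality, for real sequences. -/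
lemma isMinimalSeq_of_syndetic (z : ℕ → ℝ)
    (H : ∀ ε : ℝ, 0 < ε → ∀ N : ℕ, ∃ L : ℕ, ∀ k : ℕ, ∃ m : ℕ,
      k ≤ m ∧ m ≤ k + L ∧ ∀ i ≤ N, |z (m + i) - z i| ≤ ε) :
    IsMinimalSeq z := by
  -- main step: z ∈ shiftOrbitClosure w for every w in the orbit closure of z
  have main : ∀ w ∈ shiftOrbitClosure z, z ∈ shiftOrbitClosure w := by
    intro w hw
    -- for every ε > 0 and N, some shift of w is ε-close to z on coordinates ≤ N
    have step : ∀ ε : ℝ, 0 < ε → ∀ N : ℕ, ∃ t : ℕ, ∀ i ≤ N, |w (i + t) - z i| ≤ ε := by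
      intro ε hε N
      obtain ⟨L, hL⟩ := H ε hε N
      -- the closed set of sequences having an ε-good shift within L
      set D : Set (ℕ → ℝ) :=
        ⋃ t ∈ Finset.range (L + 1), ⋂ i ∈ Finset.range (N + 1),
          {y : ℕ → ℝ | y (i + t) ∈ Metric.closedBall (z i) ε} with hD
      have hDclosed : IsClosed D := by
        apply Set.Finite.isClosed_biUnion (Finset.range (L + 1)).finite_toSet
        intro t _
        exact isClosed_biInter fun i _ =>
          Metric.isClosed_closedBall.preimage (continuous_apply (i + t))
      have horb : (Set.range fun k => shiftSeq^[k] z) ⊆ D := by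
        rintro - ⟨k, rfl⟩
        obtain ⟨m, hkm, hmL, hclose⟩ := hL k
        have hmem : m - k ∈ Finset.range (L + 1) := Finset.mem_range.2 (by omega)
        refine Set.mem_biUnion hmem ?_
        refine Set.mem_biInter fun i hi => ?_
        have hiN : i ≤ N := Nat.lt_succ_iff.mp (Finset.mem_range.mp hi)
        simp only [Set.mem_setOf_eq, Metric.mem_closedBall, Real.dist_eq, shiftSeq_iterate]
        have he : i + (m - k) + k = m + i := by omega
        rw [he]
        exact hclose i hiN
      have hwD : w ∈ D := by
        have : shiftOrbitClosure z ⊆ D := by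
          rw [shiftOrbitClosure]
          exact closure_minimal horb hDclosed
        exact this hw
      simp only [hD, Set.mem_iUnion, Set.mem_iInter, Finset.mem_range] at hwD
      obtain ⟨t, _, ht⟩ := hwD
      exact ⟨t, fun i hi => by
        have := ht i (Nat.lt_succ_of_le hi)
        simpa [Real.dist_eq] using this⟩
    -- build a sequence of shifts converging to z
    choose t ht using fun n : ℕ => step (1 / (n + 1)) (by positivity) n
    have htend : Filter.Tendsto (fun n => shiftSeq^[t n] w) Filter.atTop (nhds z) := by
      rw [tendsto_pi_nhds]
      intro i
      rw [tendsto_iff_dist_tendsto_zero]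
      apply squeeze_zero (fun n => dist_nonneg)
        (g := fun n => if i ≤ n then 1 / ((n : ℝ) + 1) else dist (shiftSeq^[t n] w i) (z i))
      · intro n
        by_cases h : i ≤ n
        · simp only [h, if_true]
          rw [shiftSeq_iterate, Real.dist_eq]
          exact ht n i h
        · simp [h]
      · have h0 : Filter.Tendsto (fun n : ℕ => 1 / ((n : ℝ) + 1)) Filter.atTop (nhds 0) :=
          tendsto_one_div_add_atTop_nhds_zero_nat
        refine h0.congr' ?_
        filter_upwards [Filter.eventually_ge_atTop i] with n hn
        simp [hn]
    exact mem_closure_of_tendsto htend (Filter.Eventually.of_forall fun n => ⟨t n, rfl⟩)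
  -- conclude minimality
  intro w hw
  have hz : z ∈ shiftOrbitClosure w := main w hw
  have : (Set.range fun k => shiftSeq^[k] z) ⊆ shiftOrbitClosure w := by
    rintro - ⟨k, rfl⟩
    exact iterate_shiftSeq_mem_orbitClosure w _ hz k
  exact closure_minimal this isClosed_closure

/- ### Auxiliary lemmas about 2-adic valuations -/

lemma padicValNat_add_pow_mul {K a s : ℕ} (ha : 0 < a) (haK : a < 2 ^ K) :
    padicValNat 2 (a + 2 ^ K * s) = padicValNat 2 a := by
  haveI : Fact (Nat.Prime 2) := ⟨Nat.prime_two⟩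
  set p := padicValNat 2 a with hp
  have hdvd : 2 ^ p ∣ a := pow_padicValNat_dvd
  have hpK : p < K := by
    have h1 : 2 ^ p ≤ a := Nat.le_of_dvd ha hdvd
    have := lt_of_le_of_lt h1 haK
    exact (Nat.pow_lt_pow_iff_right (by norm_num)).mp this
  have hm : a + 2 ^ K * s ≠ 0 := by positivity
  have le1 : p ≤ padicValNat 2 (a + 2 ^ K * s) := by
    rw [← padicValNat_dvd_iff_le hm]
    exact dvd_add hdvd ((pow_dvd_pow 2 hpK.le).trans (Dvd.intro s rfl))
  have le2 : padicValNat 2 (a + 2 ^ K * s) ≤ p := by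
    by_contra h
    push_neg at h
    have h1 : 2 ^ (p + 1) ∣ a + 2 ^ K * s := by
      rw [padicValNat_dvd_iff_le hm]; omega
    have h2 : 2 ^ (p + 1) ∣ 2 ^ K * s := (pow_dvd_pow 2 (by omega)).trans (Dvd.intro s rfl)
    have h3 : 2 ^ (p + 1) ∣ a := by
      have := Nat.dvd_sub h1 h2
      simpa using this
    have := (padicValNat_dvd_iff_le ha.ne').mp h3
    omega
  omega

lemma padicValNat_two_pow_mul_odd (i t : ℕ) :
    padicValNat 2 (2 ^ i * (2 * t + 1)) = i := by
  haveI : Fact (Nat.Prime 2) := ⟨Nat.prime_two⟩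
  rw [padicValNat.mul (by positivity) (by omega), padicValNat.prime_pow,
    padicValNat.eq_zero_of_not_dvd (by omega)]
  omega

noncomputable section

/-- The plane with the Euclidean metric. -/
abbrev E2 := EuclideanSpace ℝ (Fin 2)

def p00 : E2 := !₂[0, 0]
def p10 : E2 := !₂[1, 0]
def p01 : E2 := !₂[0, 1]

/-- Flatten a sequence of triples into a sequence, each triple contributing
three consecutive terms. -/
def flattenTriples {Y : Type*} (b : ℕ → Y × Y × Y) : ℕ → Y := fun n =>
  if n % 3 = 0 then (b (n / 3)).1
  else if n % 3 = 1 then (b (n / 3)).2.1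
  else (b (n / 3)).2.2

/-- The sequence `x̄ = ((0,0),(1,0),(0,1)) ∗ b̄` where `b̄` is the 2-Toeplitz
sequence associated with `v`, each triple of `b̄` contributing three consecutive
terms of `x̄`. -/
def triSeq (v : ℕ → E2 × E2 × E2) : ℕ → E2 := fun n =>
  if n = 0 then p00 else if n = 1 then p10 else if n = 2 then p01
  else flattenTriples (toeplitz2 v) (n - 3)

/-- The unit square `[0,1]² ⊆ ℝ²`. -/
def unitSq : Set E2 := {p | p 0 ∈ Set.Icc (0 : ℝ) 1 ∧ p 1 ∈ Set.Icc (0 : ℝ) 1}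

/- ### Auxiliary geometric lemmas -/

lemma convex_unitSq : Convex ℝ unitSq := by
  intro x hx y hy a b ha hb hab
  constructor
  · have := convex_Icc (0:ℝ) 1 hx.1 hy.1 ha hb hab
    simpa [PiLp.add_apply, PiLp.smul_apply, smul_eq_mul] using this
  · have := convex_Icc (0:ℝ) 1 hx.2 hy.2 ha hb hab
    simpa [PiLp.add_apply, PiLp.smul_apply, smul_eq_mul] using this

lemma p00_mem : p00 ∈ unitSq := by constructor <;> simp [p00]
lemma p10_mem : p10 ∈ unitSq := by constructor <;> simp [p10]
lemma p01_mem : p01 ∈ unitSq := by constructor <;> simp [p01]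

lemma p10_ne_p01 : p10 ≠ p01 := by
  intro h
  have := congrArg (fun p : E2 => p 0) h
  simp [p10, p01] at this
lemma p00_ne_p01 : p00 ≠ p01 := by
  intro h
  have := congrArg (fun p : E2 => p 1) h
  simp [p00, p01] at this
lemma p00_ne_p10 : p00 ≠ p10 := by
  intro h
  have := congrArg (fun p : E2 => p 0) h
  simp [p00, p10] at this

/-- Key density lemma: if `A` is dense in the segment `[P,Q]` and `t` lies between
`f P` and `f Q`, then infinitely many points of `A` have `f`-value within `ε` of `t`. -/
lemma key_infinite (A : Set E2) (P Q : E2) (hPQ : P ≠ Q)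
    (hPu : P ∈ unitSq) (hQu : Q ∈ unitSq)
    (hAs : A ⊆ segment ℝ P Q) (hAd : segment ℝ P Q ⊆ closure A)
    (f : E2 → ℝ) (hf : ContinuousOn f unitSq) (t : ℝ)
    (ht : t ∈ Set.uIcc (f P) (f Q)) (ε : ℝ) (hε : 0 < ε) :
    {a ∈ A | |f a - t| ≤ ε}.Infinite := by
  have hsub : segment ℝ P Q ⊆ unitSq := convex_unitSq.segment_subset hPu hQu
  have hfc : ContinuousOn f (segment ℝ P Q) := hf.mono hsub
  -- find a preimage point of t on the segment
  have hconn : IsPreconnected (f '' segment ℝ P Q) :=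
    (convex_segment P Q).isPreconnected.image f hfc
  have hmem : t ∈ f '' segment ℝ P Q := by
    rcases Set.mem_uIcc.mp ht with h | h
    · exact hconn.Icc_subset ⟨P, left_mem_segment ℝ P Q, rfl⟩
        ⟨Q, right_mem_segment ℝ P Q, rfl⟩ h
    · exact hconn.Icc_subset ⟨Q, right_mem_segment ℝ P Q, rfl⟩
        ⟨P, left_mem_segment ℝ P Q, rfl⟩ h
  obtain ⟨x, hxseg, hfx⟩ := hmem
  -- continuity at x within the segment
  obtain ⟨δ, hδ, hδc⟩ := Metric.continuousWithinAt_iff.mp (hfc x hxseg) ε hε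
  -- A ∩ ball x δ is included in the target set
  have hincl : A ∩ Metric.ball x δ ⊆ {a ∈ A | |f a - t| ≤ ε} := by
    rintro a ⟨haA, hab⟩
    refine ⟨haA, ?_⟩
    have := hδc (hAs haA) (by simpa [Metric.mem_ball] using hab)
    rw [hfx] at this
    exact le_of_lt (by simpa [Real.dist_eq] using this)
  refine Set.Infinite.mono hincl ?_
  -- pick an endpoint different from x
  obtain ⟨e, heseg, hex⟩ : ∃ e, e ∈ segment ℝ P Q ∧ x ≠ e := by
    by_cases h : x = P
    · exact ⟨Q, right_mem_segment ℝ P Q, h ▸ hPQ⟩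
    · exact ⟨P, left_mem_segment ℝ P Q, h⟩
  have hdist : (0:ℝ) < dist x e := dist_pos.2 hex
  set c : ℝ := min 1 (δ / (4 * dist x e)) with hc
  have hc0 : 0 < c := lt_min one_pos (by positivity)
  -- the subsegment from x towards e stays in the segment and in ball x (δ/2)
  have himg : (AffineMap.lineMap x e) '' (Set.Icc (0:ℝ) c) ⊆
      segment ℝ P Q ∩ Metric.ball x (δ/2) := by
    rintro - ⟨r, ⟨hr0, hrc⟩, rfl⟩
    constructor
    · have h1 : AffineMap.lineMap x e r ∈ segment ℝ x e := by
        rw [segment_eq_image_lineMap]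
        exact ⟨r, ⟨hr0, hrc.trans (min_le_left _ _)⟩, rfl⟩
      exact (convex_segment P Q).segment_subset hxseg heseg h1
    · rw [Metric.mem_ball, dist_lineMap_left]
      have h3 : ‖r‖ = r := Real.norm_of_nonneg hr0
      have h2 : r ≤ δ / (4 * dist x e) := hrc.trans (min_le_right _ _)
      rw [h3]
      have h4 : r * dist x e ≤ δ / 4 := by
        calc r * dist x e ≤ (δ / (4 * dist x e)) * dist x e :=
              mul_le_mul_of_nonneg_right h2 dist_nonneg
          _ = δ / 4 := by field_simp
      linarith
  have hS0 : (segment ℝ P Q ∩ Metric.ball x (δ/2)).Infinite := by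
    refine Set.Infinite.mono himg ?_
    refine Set.Infinite.image ?_ (Set.Icc_infinite hc0)
    exact (AffineMap.lineMap_injective ℝ hex).injOn
  -- every point of that subsegment is in the closure of A ∩ ball x δ
  have hcl : segment ℝ P Q ∩ Metric.ball x (δ/2) ⊆ closure (A ∩ Metric.ball x δ) := by
    rintro y ⟨hyseg, hyball⟩
    rw [mem_closure_iff]
    intro O hO hyO
    have hy2 : y ∈ closure A := hAd hyseg
    rw [mem_closure_iff] at hy2
    have hyb : y ∈ Metric.ball x δ := by
      rw [Metric.mem_ball] at *
      linarith
    obtain ⟨a, ⟨haO, hab⟩, haA⟩ := hy2 (O ∩ Metric.ball x δ)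
      (hO.inter Metric.isOpen_ball) ⟨hyO, hyb⟩
    exact ⟨a, haO, haA, hab⟩
  by_contra hfin
  rw [Set.not_infinite] at hfin
  have hsub2 : segment ℝ P Q ∩ Metric.ball x (δ/2) ⊆ A ∩ Metric.ball x δ :=
    hcl.trans (le_of_eq hfin.isClosed.closure_eq)
  exact hS0 (hfin.subset hsub2)

/-- From an infinite subset of the range of `v`, extract arbitrarily large indices. -/
lemma exists_index {α : Type*} (v : ℕ → α) (P : Set α) (hP : P.Infinite)
    (hPr : P ⊆ Set.range v) (n0 : ℕ) : ∃ i, n0 ≤ i ∧ v i ∈ P := by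
  have hI : (v ⁻¹' P).Infinite := by
    intro hfin
    have h1 : v '' (v ⁻¹' P) = P := Set.image_preimage_eq_of_subset hPr
    have := hfin.image v
    rw [h1] at this
    exact hP this
  obtain ⟨i, hi, hni⟩ := hI.exists_gt n0
  exact ⟨i, hni.le, hi⟩

/- ### Auxiliary lemmas about `triSeq` -/

lemma flatten_congr {Y : Type*} (b : ℕ → Y × Y × Y) {m n : ℕ} (h1 : m % 3 = n % 3)
    (h2 : b (m / 3) = b (n / 3)) : flattenTriples b m = flattenTriples b n := by
  unfold flattenTriples
  rw [h1, h2]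

lemma triSeq_ge3 (v : ℕ → E2 × E2 × E2) (n : ℕ) (h : 3 ≤ n) :
    triSeq v n = flattenTriples (toeplitz2 v) (n - 3) := by
  unfold triSeq
  rw [if_neg (by omega), if_neg (by omega), if_neg (by omega)]

lemma toeplitz_shift (v : ℕ → E2 × E2 × E2) (N s q : ℕ) (hq : q ≤ N) :
    toeplitz2 v (q + 2 ^ (N + 1) * s) = toeplitz2 v q := by
  unfold toeplitz2
  congr 1
  have h1 : q + 2 ^ (N + 1) * s + 1 = (q + 1) + 2 ^ (N + 1) * s := by ring
  rw [h1]
  exact padicValNat_add_pow_mul (by omega)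
    (lt_of_le_of_lt (by omega) (Nat.lt_two_pow_self (n := N + 1)))

lemma triSeq_periodic (v : ℕ → E2 × E2 × E2) (N s j : ℕ) (h3 : 3 ≤ j) (hjN : j ≤ N + 3) :
    triSeq v (j + 3 * (2 ^ (N + 1) * s)) = triSeq v j := by
  set c := 2 ^ (N + 1) * s with hc
  rw [triSeq_ge3 _ _ h3, triSeq_ge3 _ _ (by omega)]
  have hd : j + 3 * c - 3 = (j - 3) + 3 * c := by omega
  rw [hd]
  apply flatten_congr
  · omega
  · have h1 : ((j - 3) + 3 * c) / 3 = (j - 3) / 3 + c := by omega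
    rw [h1, hc]
    exact toeplitz_shift v N s _ (by omega)

lemma triSeq_3q0 (v : ℕ → E2 × E2 × E2) (q : ℕ) :
    triSeq v (3 * q + 3) = (toeplitz2 v q).1 := by
  rw [triSeq_ge3 _ _ (by omega)]
  have h : 3 * q + 3 - 3 = 3 * q := by omega
  have h1 : (3 * q) % 3 = 0 := by omega
  have h2 : (3 * q) / 3 = q := by omega
  rw [h]
  unfold flattenTriples
  rw [h1, h2]
  norm_num

lemma triSeq_3q1 (v : ℕ → E2 × E2 × E2) (q : ℕ) :
    triSeq v (3 * q + 4) = (toeplitz2 v q).2.1 := by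
  rw [triSeq_ge3 _ _ (by omega)]
  have h : 3 * q + 4 - 3 = 3 * q + 1 := by omega
  have h1 : (3 * q + 1) % 3 = 1 := by omega
  have h2 : (3 * q + 1) / 3 = q := by omega
  rw [h]
  unfold flattenTriples
  rw [h1, h2]
  norm_num

lemma triSeq_3q2 (v : ℕ → E2 × E2 × E2) (q : ℕ) :
    triSeq v (3 * q + 5) = (toeplitz2 v q).2.2 := by
  rw [triSeq_ge3 _ _ (by omega)]
  have h : 3 * q + 5 - 3 = 3 * q + 2 := by omega
  have h1 : (3 * q + 2) % 3 = 2 := by omega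
  have h2 : (3 * q + 2) / 3 = q := by omega
  rw [h]
  unfold flattenTriples
  rw [h1, h2]
  norm_num

lemma toeplitz_at (v : ℕ → E2 × E2 × E2) (i t : ℕ) :
    toeplitz2 v (2 ^ i * (2 * t + 1) - 1) = v i := by
  unfold toeplitz2
  have h1 : 1 ≤ 2 ^ i * (2 * t + 1) := Nat.one_le_iff_ne_zero.2 (by positivity)
  have h : 2 ^ i * (2 * t + 1) - 1 + 1 = 2 ^ i * (2 * t + 1) := by omega
  rw [h, padicValNat_two_pow_mul_odd]

/-- Given a good index `i ≥ N+1`, the initial block of length `N+1` of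
`f ∘ triSeq v` recurs `ε`-approximately syndetically. -/
lemma occurrence (v : ℕ → E2 × E2 × E2) (f : E2 → ℝ) (ε : ℝ) (hε : 0 ≤ ε)
    (N i : ℕ) (hiN : N + 1 ≤ i)
    (h0 : |f (v i).1 - f p00| ≤ ε) (h1 : |f (v i).2.1 - f p10| ≤ ε)
    (h2 : |f (v i).2.2 - f p01| ≤ ε) (k : ℕ) :
    ∃ m, k ≤ m ∧ m ≤ k + 3 * 2 ^ (i + 2) ∧
      ∀ j ≤ N, |f (triSeq v (m + j)) - f (triSeq v j)| ≤ ε := by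
  set E := 2 ^ i with hE
  have hE1 : 1 ≤ E := Nat.one_le_two_pow
  set d := k / (6 * E) with hd
  set t := d + 1 with hT
  set m := 3 * E * (2 * t + 1) with hm
  set X := E * d with hX
  have e0 : 6 * E * d + k % (6 * E) = k := Nat.div_add_mod k (6 * E)
  have e1 : k % (6 * E) < 6 * E := Nat.mod_lt k (by omega)
  have e2 : m = 6 * X + 9 * E := by rw [hm, hT, hX]; ring
  have e3 : 6 * E * d = 6 * X := by rw [hX]; ring
  refine ⟨m, by omega, ?_, ?_⟩
  · have e4 : 3 * 2 ^ (i + 2) = 12 * E := by rw [hE, pow_add]; ring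
    omega
  · intro j hj
    have hu : 1 ≤ E * (2 * t + 1) := Nat.one_le_iff_ne_zero.2 (by positivity)
    set q := E * (2 * t + 1) - 1 with hq
    have e5 : m = 3 * (E * (2 * t + 1)) := by rw [hm]; ring
    have hmq : m = 3 * q + 3 := by rw [hq]; omega
    have hvq : toeplitz2 v q = v i := by rw [hq, hE]; exact toeplitz_at v i t
    match j, hj with
    | 0, _ =>
        have : m + 0 = 3 * q + 3 := by omega
        rw [this, triSeq_3q0, hvq]
        have : triSeq v 0 = p00 := by simp [triSeq]
        rw [this]
        exact h0
    | 1, _ =>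
        have : m + 1 = 3 * q + 4 := by omega
        rw [this, triSeq_3q1, hvq]
        have : triSeq v 1 = p10 := by simp [triSeq]
        rw [this]
        exact h1
    | 2, _ =>
        have : m + 2 = 3 * q + 5 := by omega
        rw [this, triSeq_3q2, hvq]
        have : triSeq v 2 = p01 := by simp [triSeq]
        rw [this]
        exact h2
    | (j' + 3), hj =>
        set s := 2 ^ (i - (N + 1)) * (2 * t + 1) with hs
        have hEe : E = 2 ^ (N + 1) * 2 ^ (i - (N + 1)) := by
          rw [hE, ← pow_add]
          congr 1
          omega
        have hidx : m + (j' + 3) = (j' + 3) + 3 * (2 ^ (N + 1) * s) := by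
          rw [hm, hs, hEe]; ring
        rw [hidx, triSeq_periodic v N s (j' + 3) (by omega) (by omega)]
        simpa using hε

/-- For the sequence `x̄` built from the triangle data and every continuous
`f : [0,1]² → [0,1]`, the sequence `(f x₁, f x₂, …)` is minimal.  Here `A₁, A₂, A₃`
are countable dense subsets of the segments `[(1,0),(0,1)]`, `[(0,0),(0,1)]`,
`[(0,0),(1,0)]` respectively, and `v` is an enumeration of
`(A₁×{(1,0)}×{(0,1)}) ∪ ({(0,0)}×A₂×{(0,1)}) ∪ ({(0,0)}×{(1,0)}×A₃)`. -/
theorem continuous_image_of_triSeq_isMinimalSeq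
    (A1 A2 A3 : Set E2)
    (hA1s : A1 ⊆ segment ℝ p10 p01) (hA1c : A1.Countable)
    (hA1d : segment ℝ p10 p01 ⊆ closure A1)
    (hA2s : A2 ⊆ segment ℝ p00 p01) (hA2c : A2.Countable)
    (hA2d : segment ℝ p00 p01 ⊆ closure A2)
    (hA3s : A3 ⊆ segment ℝ p00 p10) (hA3c : A3.Countable)
    (hA3d : segment ℝ p00 p10 ⊆ closure A3)
    (v : ℕ → E2 × E2 × E2) (hvinj : Function.Injective v)
    (hvr : Set.range v =
      (A1 ×ˢ (({p10} : Set E2) ×ˢ ({p01} : Set E2))) ∪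
      (({p00} : Set E2) ×ˢ (A2 ×ˢ ({p01} : Set E2))) ∪
      (({p00} : Set E2) ×ˢ (({p10} : Set E2) ×ˢ A3)))
    (f : E2 → ℝ) (hf : ContinuousOn f unitSq)
    (hmaps : Set.MapsTo f unitSq (Set.Icc (0 : ℝ) 1)) :
    IsMinimalSeq (fun n => f (triSeq v n)) := by
  -- one of the three vertex values is between the two others
  have tri : ∀ x y w : ℝ, x ∈ Set.uIcc y w ∨ y ∈ Set.uIcc x w ∨ w ∈ Set.uIcc x y := by
    intro x y w
    simp only [Set.mem_uIcc]
    rcases le_total x y with h1 | h1 <;> rcases le_total y w with h2 | h2 <;>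
      rcases le_total x w with h3 | h3 <;> tauto
  -- for every ε there are arbitrarily large indices whose triple is ε-close
  -- (in f-values) to the triple of vertices
  have good : ∀ ε : ℝ, 0 < ε → ∀ n0 : ℕ, ∃ i, n0 ≤ i ∧
      |f (v i).1 - f p00| ≤ ε ∧ |f (v i).2.1 - f p10| ≤ ε ∧
      |f (v i).2.2 - f p01| ≤ ε := by
    intro ε hε n0
    rcases tri (f p00) (f p10) (f p01) with h | h | h
    · -- f p00 is between f p10 and f p01 : use A1
      have hT := key_infinite A1 p10 p01 p10_ne_p01 p10_mem p01_mem hA1s hA1d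
        f hf (f p00) h ε hε
      have hP : (fun x : E2 => (x, p10, p01)) '' {a ∈ A1 | |f a - f p00| ≤ ε} ⊆
          Set.range v := by
        rintro - ⟨x, hxT, rfl⟩
        rw [hvr]
        left; left
        exact Set.mem_prod.2 ⟨hxT.1, Set.mem_prod.2 ⟨rfl, rfl⟩⟩
      have hinj : Function.Injective (fun x : E2 => (x, p10, p01)) := by
        intro a b hab
        exact congrArg Prod.fst hab
      have hPinf := hT.image hinj.injOn
      obtain ⟨i, hi, hvi⟩ := exists_index v _ hPinf hP n0
      obtain ⟨x, hxT, hxe⟩ := hvi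
      refine ⟨i, hi, ?_, ?_, ?_⟩ <;> rw [← hxe]
      · exact hxT.2
      · simpa using hε.le
      · simpa using hε.le
    · -- f p10 is between f p00 and f p01 : use A2
      have hT := key_infinite A2 p00 p01 p00_ne_p01 p00_mem p01_mem hA2s hA2d
        f hf (f p10) h ε hε
      have hP : (fun x : E2 => (p00, x, p01)) '' {a ∈ A2 | |f a - f p10| ≤ ε} ⊆
          Set.range v := by
        rintro - ⟨x, hxT, rfl⟩
        rw [hvr]
        left; right
        exact Set.mem_prod.2 ⟨rfl, Set.mem_prod.2 ⟨hxT.1, rfl⟩⟩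
      have hinj : Function.Injective (fun x : E2 => (p00, x, p01)) := by
        intro a b hab
        exact congrArg (fun p : E2 × E2 × E2 => p.2.1) hab
      have hPinf := hT.image hinj.injOn
      obtain ⟨i, hi, hvi⟩ := exists_index v _ hPinf hP n0
      obtain ⟨x, hxT, hxe⟩ := hvi
      refine ⟨i, hi, ?_, ?_, ?_⟩ <;> rw [← hxe]
      · simpa using hε.le
      · exact hxT.2
      · simpa using hε.le
    · -- f p01 is between f p00 and f p10 : use A3
      have hT := key_infinite A3 p00 p10 p00_ne_p10 p00_mem p10_mem hA3s hA3d
        f hf (f p01) h ε hε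
      have hP : (fun x : E2 => (p00, p10, x)) '' {a ∈ A3 | |f a - f p01| ≤ ε} ⊆
          Set.range v := by
        rintro - ⟨x, hxT, rfl⟩
        rw [hvr]
        right
        exact Set.mem_prod.2 ⟨rfl, Set.mem_prod.2 ⟨rfl, hxT.1⟩⟩
      have hinj : Function.Injective (fun x : E2 => (p00, p10, x)) := by
        intro a b hab
        exact congrArg (fun p : E2 × E2 × E2 => p.2.2) hab
      have hPinf := hT.image hinj.injOn
      obtain ⟨i, hi, hvi⟩ := exists_index v _ hPinf hP n0
      obtain ⟨x, hxT, hxe⟩ := hvi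
      refine ⟨i, hi, ?_, ?_, ?_⟩ <;> rw [← hxe]
      · simpa using hε.le
      · simpa using hε.le
      · exact hxT.2
  -- conclude by the syndetic recurrence criterion
  apply isMinimalSeq_of_syndetic
  intro ε hε N
  obtain ⟨i, hiN, h0, h1, h2⟩ := good ε hε (N + 1)
  refine ⟨3 * 2 ^ (i + 2), fun k => ?_⟩
  obtain ⟨m, hm1, hm2, hm3⟩ := occurrence v f ε hε.le N i hiN h0 h1 h2 k
  exact ⟨m, hm1, hm2, hm3⟩

end
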